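/- Let a_0, a_1, …, a_d be a unimodal sequence of positive real numbers (i.e., there exists an index m with a_0 ≤ a_1 ≤ ⋯ ≤ a_m ≥ a_{m+1} ≥ ⋯ ≥ a_d) such that Σ_{j=0}^d (−1)^j a_j = 0. Then for every k ∈ {0, 1, …, d}, one has (−1)^k · Σ_{j=0}^k (−1)^j a_j ≥ 0. -/

import Mathlib

/-- Alternating sum of a nonnegative antitone (on `[0,n)`) sequence is nonnegative. -/
lemma altsum_nonneg : ∀ (n : ℕ) (b : ℕ → ℝ), (∀ t, t < n → 0 ≤ b t) →
    (∀ i j, i ≤ j → j < n → b j ≤ b i) →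
    0 ≤ ∑ t ∈ Finset.range n, (-1 : ℝ) ^ t * b t := by
  intro n
  induction n using Nat.strong_induction_on with
  | _ n ih =>
    match n with
    | 0 => intro b _ _; simp
    | 1 => intro b h _; simpa using h 0 (by norm_num)
    | (n+2) =>
      intro b hpos hdec
      have key : ∑ t ∈ Finset.range (n+2), (-1 : ℝ) ^ t * b t
          = (b 0 - b 1) + ∑ t ∈ Finset.range n, (-1 : ℝ) ^ t * b (t+2) := by
        rw [Finset.sum_range_succ' _ (n+1), Finset.sum_range_succ' _ n]
        simp [pow_succ]
        have e : ∀ x : ℕ, x + 1 + 1 = x + 2 := fun _ => rfl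
        simp only [e]
        ring
      rw [key]
      have h1 : 0 ≤ b 0 - b 1 := sub_nonneg.2 (hdec 0 1 (by norm_num) (by omega))
      have h2 : 0 ≤ ∑ t ∈ Finset.range n, (-1 : ℝ) ^ t * b (t+2) := by
        apply ih n (by omega)
        · intro t ht; exact hpos (t+2) (by omega)
        · intro i j hij hj; exact hdec (i+2) (j+2) (by omega) (by omega)
      linarith

theorem stmt12 (d : ℕ) (a : ℕ → ℝ)
    (hpos : ∀ j ≤ d, 0 < a j)
    (hunimodal : ∃ m ≤ d,
      (∀ i j, i ≤ j → j ≤ m → a i ≤ a j) ∧ (∀ i j, m ≤ i → i ≤ j → j ≤ d → a j ≤ a i))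
    (hsum : ∑ j ∈ Finset.range (d + 1), (-1 : ℝ) ^ j * a j = 0) :
    ∀ k ≤ d, 0 ≤ (-1 : ℝ) ^ k * ∑ j ∈ Finset.range (k + 1), (-1 : ℝ) ^ j * a j := by
  obtain ⟨m, hmd, hinc, hdec⟩ := hunimodal
  intro k hk
  rcases le_total k m with hkm | hmk
  · -- head case: a increasing on [0,k]
    have : (-1 : ℝ) ^ k * ∑ j ∈ Finset.range (k + 1), (-1 : ℝ) ^ j * a j
        = ∑ t ∈ Finset.range (k + 1), (-1 : ℝ) ^ t * a (k - t) := by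
      rw [Finset.mul_sum, ← Finset.sum_range_reflect]
      apply Finset.sum_congr rfl
      intro t ht
      simp only [Finset.mem_range] at ht
      have h1 : k + 1 - 1 - t = k - t := by omega
      rw [h1]
      have h2 : (-1 : ℝ) ^ (k - t) * (-1 : ℝ) ^ t = (-1 : ℝ) ^ k := by
        rw [← pow_add]; congr 1; omega
      calc (-1 : ℝ) ^ k * ((-1 : ℝ) ^ (k-t) * a (k-t))
          = ((-1 : ℝ)^(k-t) * (-1:ℝ)^t) * ((-1:ℝ)^(k-t) * a (k-t)) := by rw [h2]
        _ = ((-1:ℝ)^(k-t))^2 * ((-1:ℝ)^t * a (k-t)) := by ring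
        _ = (-1 : ℝ) ^ t * a (k - t) := by
            rcases neg_one_pow_eq_or ℝ (k-t) with h | h <;> rw [h] <;> norm_num
    rw [this]
    apply altsum_nonneg
    · intro t ht; exact (hpos (k - t) (by omega)).le
    · intro i j hij hj
      exact hinc (k - j) (k - i) (by omega) (by omega)
  · -- tail case
    have hsplit : ∑ j ∈ Finset.range (k + 1), (-1 : ℝ) ^ j * a j
        = - ∑ j ∈ Finset.Ico (k + 1) (d + 1), (-1 : ℝ) ^ j * a j := by
      have h0 : ∑ j ∈ Finset.range (k + 1), (-1 : ℝ) ^ j * a j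
          + ∑ j ∈ Finset.Ico (k + 1) (d + 1), (-1 : ℝ) ^ j * a j
          = ∑ j ∈ Finset.range (d + 1), (-1 : ℝ) ^ j * a j := by
        simp only [Finset.range_eq_Ico]
        exact Finset.sum_Ico_consecutive (f := fun j => (-1 : ℝ) ^ j * a j) (m := 0) (n := k + 1) (k := d + 1) (Nat.zero_le _) (by omega)
      linarith
    rw [hsplit]
    have hre : ∑ j ∈ Finset.Ico (k + 1) (d + 1), (-1 : ℝ) ^ j * a j
        = ∑ t ∈ Finset.range (d - k), (-1 : ℝ) ^ (k + 1 + t) * a (k + 1 + t) := by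
      rw [Finset.sum_Ico_eq_sum_range]
      have e : d + 1 - (k + 1) = d - k := by omega
      rw [e]
    have key : (-1 : ℝ) ^ k * - ∑ j ∈ Finset.Ico (k + 1) (d + 1), (-1 : ℝ) ^ j * a j
        = ∑ t ∈ Finset.range (d - k), (-1 : ℝ) ^ t * a (k + 1 + t) := by
      rw [hre, mul_neg, Finset.mul_sum, ← Finset.sum_neg_distrib]
      apply Finset.sum_congr rfl
      intro t _
      rw [pow_add, pow_add]
      rcases neg_one_pow_eq_or ℝ k with h | h <;> rw [h] <;> ring
    rw [key]
    apply altsum_nonneg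
    · intro t ht; exact (hpos (k + 1 + t) (by omega)).le
    · intro i j hij hj
      exact hdec (k + 1 + i) (k + 1 + j) (by omega) (by omega) (by omega)
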